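/- The convex relaxation of a generalized intersection of hybrid zonotopes equals the intersection of the relaxations: if X, Z ⊆ ℝⁿ are hybrid zonotopes and X ∩ Z is the standard hybrid zonotope intersection (concatenating factors and adding the constraint that the two affine images agree), then R(X ∩ Z) = R(X) ∩ R(Z). -/

import Mathlib

open Matrix Set

/-- A hybrid zonotope with given generators, center and constraints. -/
def hybZono {ι γ β κ : Type*} [Fintype γ] [Fintype β]
    (Gc : Matrix ι γ ℝ) (Gb : Matrix ι β ℝ) (c : ι → ℝ)
    (Ac : Matrix κ γ ℝ) (Ab : Matrix κ β ℝ) (b : κ → ℝ) : Set (ι → ℝ) :=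
  {x | ∃ (ξc : γ → ℝ) (ξb : β → ℝ),
      (∀ i, ξc i ∈ Icc (-1 : ℝ) 1) ∧ (∀ i, ξb i = -1 ∨ ξb i = 1) ∧
      Ac.mulVec ξc + Ab.mulVec ξb = b ∧
      x = Gc.mulVec ξc + Gb.mulVec ξb + c}

/-- The convex relaxation of a hybrid zonotope representation. -/
def hybZonoRelax {ι γ β κ : Type*} [Fintype γ] [Fintype β]
    (Gc : Matrix ι γ ℝ) (Gb : Matrix ι β ℝ) (c : ι → ℝ)
    (Ac : Matrix κ γ ℝ) (Ab : Matrix κ β ℝ) (b : κ → ℝ) : Set (ι → ℝ) :=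
  {x | ∃ (ξc : γ → ℝ) (ξb : β → ℝ),
      (∀ i, ξc i ∈ Icc (-1 : ℝ) 1) ∧ (∀ i, ξb i ∈ Icc (-1 : ℝ) 1) ∧
      Ac.mulVec ξc + Ab.mulVec ξb = b ∧
      x = Gc.mulVec ξc + Gb.mulVec ξb + c}


/-- The convex relaxation of the standard hybrid zonotope intersection
(concatenated factors, block-diagonal constraints, plus the constraint that
the two affine images agree) equals the intersection of the relaxations. -/
theorem relaxation_of_intersection
    (n ngX ngZ nbX nbZ ncX ncZ : ℕ)
    (GcX : Matrix (Fin n) (Fin ngX) ℝ) (GbX : Matrix (Fin n) (Fin nbX) ℝ)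
    (cX : Fin n → ℝ)
    (AcX : Matrix (Fin ncX) (Fin ngX) ℝ) (AbX : Matrix (Fin ncX) (Fin nbX) ℝ)
    (bX : Fin ncX → ℝ)
    (GcZ : Matrix (Fin n) (Fin ngZ) ℝ) (GbZ : Matrix (Fin n) (Fin nbZ) ℝ)
    (cZ : Fin n → ℝ)
    (AcZ : Matrix (Fin ncZ) (Fin ngZ) ℝ) (AbZ : Matrix (Fin ncZ) (Fin nbZ) ℝ)
    (bZ : Fin ncZ → ℝ) :
    hybZonoRelax (Matrix.fromCols GcX 0) (Matrix.fromCols GbX 0) cX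
        (Matrix.fromBlocks (Matrix.fromRows AcX 0) (Matrix.fromRows 0 AcZ)
          GcX (-GcZ))
        (Matrix.fromBlocks (Matrix.fromRows AbX 0) (Matrix.fromRows 0 AbZ)
          GbX (-GbZ))
        (Sum.elim (Sum.elim bX bZ) (cZ - cX)) =
      hybZonoRelax GcX GbX cX AcX AbX bX ∩ hybZonoRelax GcZ GbZ cZ AcZ AbZ bZ := by
  ext x
  simp only [hybZonoRelax, mem_setOf_eq, mem_inter_iff]
  constructor
  · rintro ⟨ξc, ξb, hc, hb, hA, hx⟩
    rw [← Sum.elim_comp_inl_inr ξc, ← Sum.elim_comp_inl_inr ξb] at hA hx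
    rw [Matrix.fromBlocks_mulVec, Matrix.fromBlocks_mulVec] at hA
    have hAX : AcX.mulVec (ξc ∘ Sum.inl) + AbX.mulVec (ξb ∘ Sum.inl) = bX := by
      funext i
      have h := congrFun hA (Sum.inl (Sum.inl i))
      simpa [Matrix.fromRows_mulVec, Sum.elim_comp_inl, Sum.elim_comp_inr] using h
    have hAZ : AcZ.mulVec (ξc ∘ Sum.inr) + AbZ.mulVec (ξb ∘ Sum.inr) = bZ := by
      funext i
      have h := congrFun hA (Sum.inl (Sum.inr i))
      simpa [Matrix.fromRows_mulVec, Sum.elim_comp_inl, Sum.elim_comp_inr] using h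
    rw [Matrix.fromCols_mulVec_sumElim, Matrix.fromCols_mulVec_sumElim] at hx
    simp only [Sum.elim_comp_inl, Sum.elim_comp_inr, Matrix.zero_mulVec, add_zero] at hx
    have heq : GcX.mulVec (ξc ∘ Sum.inl) + GbX.mulVec (ξb ∘ Sum.inl) + cX
        = GcZ.mulVec (ξc ∘ Sum.inr) + GbZ.mulVec (ξb ∘ Sum.inr) + cZ := by
      funext i
      have h := congrFun hA (Sum.inr i)
      simp only [Sum.elim_inr, Sum.elim_comp_inl, Sum.elim_comp_inr, Matrix.neg_mulVec,
        Pi.add_apply, Pi.neg_apply, Pi.sub_apply] at h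
      simp only [Pi.add_apply]
      linarith
    refine ⟨⟨ξc ∘ Sum.inl, ξb ∘ Sum.inl, fun i => hc (Sum.inl i), fun i => hb (Sum.inl i), hAX, hx⟩,
      ξc ∘ Sum.inr, ξb ∘ Sum.inr, fun i => hc (Sum.inr i), fun i => hb (Sum.inr i), hAZ, ?_⟩
    rw [hx, heq]
  · rintro ⟨⟨ξcX, ξbX, hcX, hbX, hAX, hxX⟩, ξcZ, ξbZ, hcZ, hbZ, hAZ, hxZ⟩
    refine ⟨Sum.elim ξcX ξcZ, Sum.elim ξbX ξbZ, fun i => ?_, fun i => ?_, ?_, ?_⟩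
    · cases i with
      | inl i => exact hcX i
      | inr i => exact hcZ i
    · cases i with
      | inl i => exact hbX i
      | inr i => exact hbZ i
    · rw [Matrix.fromBlocks_mulVec, Matrix.fromBlocks_mulVec]
      funext i
      cases i with
      | inl i =>
        simp only [Pi.add_apply, Sum.elim_inl, Matrix.fromRows_mulVec]
        cases i with
        | inl i =>
          have := congrFun hAX i
          simpa using this
        | inr i =>
          have := congrFun hAZ i
          simpa using this
      | inr i =>
        have h := congrFun hxX i
        have h' := congrFun hxZ i
        simp only [Pi.add_apply, Sum.elim_inr, Matrix.neg_mulVec, Pi.neg_apply,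
          Pi.sub_apply, Sum.elim_comp_inl, Sum.elim_comp_inr] at h h' ⊢
        linarith
    · rw [Matrix.fromCols_mulVec_sumElim, Matrix.fromCols_mulVec_sumElim]
      simp only [Matrix.zero_mulVec, add_zero]
      exact hxX
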